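/- Let N ≥ 1 be an integer, let A = ℤ[X]/(X^N − 1), and let I be the ideal of A generated by the image of X − 1. Then for every integer n ≥ 1, the quotient abelian group I^n / I^{n+1} is isomorphic to ℤ/Nℤ. (This computes the graded ring associated to the augmentation filtration on the representation ring of a cyclic group of order N over an algebraically closed field of characteristic prime to N.) -/

import Mathlib

open Polynomial

/-- `A N = ℤ[X]/(X^N - 1)`, the representation ring of a cyclic group of order `N` over an
algebraically closed field of characteristic prime to `N`. -/
abbrev A (N : ℕ) : Type :=
  Polynomial ℤ ⧸ Ideal.span ({X ^ N - 1} : Set (Polynomial ℤ))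

/-- `Iaug N` is the augmentation ideal of `A N`, generated by the image of `X - 1`. -/
noncomputable def Iaug (N : ℕ) : Ideal (A N) :=
  Ideal.span {Ideal.Quotient.mk (Ideal.span ({X ^ N - 1} : Set (Polynomial ℤ))) (X - 1)}

/-! ### Auxiliary lemmas -/

/-- The key coefficient computation: if `m Xⁿ = Xⁿ⁺¹ a + ((X+1)^N - 1) b` in `ℤ[X]`,
then `N ∣ m`. -/
private lemma key_coeff (N : ℕ) (hN : 1 ≤ N) (n : ℕ) (hn : 1 ≤ n) (m : ℤ) (a b : Polynomial ℤ)
    (h : C m * X ^ n = X ^ (n+1) * a + ((X+1)^N - 1) * b) : (N:ℤ) ∣ m := by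
  set c : Polynomial ℤ := (X+1)^N - 1 with hc
  have hc0 : c.coeff 0 = 0 := by
    simp [hc, coeff_sub, coeff_X_add_one_pow, Polynomial.coeff_one]
  have hc1 : c.coeff 1 = N := by
    rw [hc, coeff_sub, coeff_X_add_one_pow, Polynomial.coeff_one, Nat.choose_one_right]
    simp
  rw [mul_comm (X^(n+1) : Polynomial ℤ) a] at h
  have H : ∀ j ≤ n, (c * b).coeff j = if j = n then m else 0 := by
    intro j hj
    have h2 := congrArg (fun p => Polynomial.coeff p j) h
    simp only [coeff_C_mul, coeff_X_pow, coeff_mul_X_pow', coeff_add] at h2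
    rw [if_neg (by omega : ¬ n+1 ≤ j), zero_add] at h2
    rw [← h2]
    by_cases hj' : j = n
    · subst hj'; rw [if_pos le_rfl, Nat.sub_self, coeff_C_zero, if_pos rfl]
    · rw [if_neg (by omega : ¬ n ≤ j), if_neg hj']
  have expand : ∀ j, (c * b).coeff j
      = ∑ k ∈ Finset.range (j+1), c.coeff k * b.coeff (j - k) := by
    intro j
    rw [coeff_mul, Finset.Nat.sum_antidiagonal_eq_sum_range_succ_mk]
  have B : ∀ j, j + 2 ≤ n → b.coeff j = 0 := by
    intro j
    induction j using Nat.strong_induction_on with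
    | _ j ih =>
      intro hj2
      have h1 : (c * b).coeff (j+1) = 0 := by
        rw [H (j+1) (by omega)]; exact if_neg (by omega)
      rw [expand] at h1
      have hsum : ∑ k ∈ Finset.range (j+2), c.coeff k * b.coeff (j+1-k)
          = c.coeff 1 * b.coeff j := by
        apply Finset.sum_eq_single_of_mem 1 (Finset.mem_range.2 (by omega))
        intro k hk hk1
        have hk' := Finset.mem_range.1 hk
        rcases Nat.eq_zero_or_pos k with rfl | hkpos
        · simp [hc0]
        · rw [ih (j+1-k) (by omega) (by omega), mul_zero]
      rw [hsum, hc1] at h1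
      have hNz : (N:ℤ) ≠ 0 := by exact_mod_cast (by omega : N ≠ 0)
      exact (mul_eq_zero.1 h1).resolve_left hNz
  have hm : (c * b).coeff n = m := by rw [H n le_rfl, if_pos rfl]
  rw [expand] at hm
  have hsum : ∑ k ∈ Finset.range (n+1), c.coeff k * b.coeff (n - k)
      = c.coeff 1 * b.coeff (n-1) := by
    apply Finset.sum_eq_single_of_mem 1 (Finset.mem_range.2 (by omega))
    intro k hk hk1
    have hk' := Finset.mem_range.1 hk
    rcases Nat.eq_zero_or_pos k with rfl | hkpos
    · simp [hc0]
    · rw [B (n-k) (by omega), mul_zero]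
  rw [hsum, hc1] at hm
  exact ⟨b.coeff (n-1), hm.symm⟩

private lemma x_sub_one_sq_dvd (N : ℕ) :
    (X - 1 : Polynomial ℤ)^2 ∣ X^N - 1 - C (N:ℤ) * (X - 1) := by
  have h : (X : Polynomial ℤ)^2 ∣ (X+1)^N - 1 - C (N:ℤ) * X := by
    rw [X_pow_dvd_iff]
    intro d hd
    interval_cases d
    · simp [coeff_X_add_one_pow, Polynomial.coeff_one]
    · simp [coeff_X_add_one_pow, Polynomial.coeff_one, Nat.choose_one_right, coeff_C_mul]
  have := map_dvd (aeval (X - 1 : Polynomial ℤ)) h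
  simpa using this

/-- The quotient map `ℤ[X] → A N`. -/
private noncomputable def mkN (N : ℕ) : Polynomial ℤ →+* A N :=
  Ideal.Quotient.mk (Ideal.span ({X ^ N - 1} : Set (Polynomial ℤ)))

private lemma span_mkN_iff (N : ℕ) (p g : Polynomial ℤ) :
    mkN N p ∈ Ideal.span {mkN N g} ↔
      ∃ v w : Polynomial ℤ, p = g * v + (X^N - 1) * w := by
  simp only [mkN]
  constructor
  · intro hmem
    obtain ⟨u, hu⟩ := Ideal.mem_span_singleton'.mp hmem
    obtain ⟨v, rfl⟩ := Ideal.Quotient.mk_surjective u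
    rw [← map_mul, Ideal.Quotient.mk_eq_mk_iff_sub_mem, Ideal.mem_span_singleton] at hu
    obtain ⟨w, hw⟩ := hu
    exact ⟨v, -w, by linear_combination -hw⟩
  · rintro ⟨v, w, rfl⟩
    refine Ideal.mem_span_singleton'.mpr ⟨Ideal.Quotient.mk _ v, ?_⟩
    rw [← map_mul, Ideal.Quotient.mk_eq_mk_iff_sub_mem, Ideal.mem_span_singleton]
    exact ⟨-w, by ring⟩

private lemma Iaug_pow (N k : ℕ) : Iaug N ^ k = Ideal.span {mkN N ((X-1)^k)} := by
  rw [Iaug, Ideal.span_singleton_pow, ← map_pow]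
  rfl

private lemma intCast_A (N : ℕ) (m : ℤ) : ((m : A N)) = mkN N (C m) := by
  simp [mkN]

/-- Membership of `m (X-1)ⁿ` in `Iⁿ⁺¹` is equivalent to `N ∣ m`. -/
private lemma mem_iff_dvd (N : ℕ) (hN : 1 ≤ N) (n : ℕ) (hn : 1 ≤ n) (m : ℤ) :
    mkN N (C m * (X-1)^n) ∈ Ideal.span {mkN N ((X-1)^(n+1))} ↔ (N:ℤ) ∣ m := by
  rw [span_mkN_iff]
  constructor
  · rintro ⟨v, w, hw⟩
    have h2 := congrArg (aeval (X+1 : Polynomial ℤ)) hw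
    simp only [map_add, map_mul, map_pow, map_sub, map_one, aeval_X, add_sub_cancel_right,
      aeval_C, algebraMap_int_eq, eq_intCast, map_intCast] at h2
    rw [← C_eq_intCast m] at h2
    exact key_coeff N hN n hn m _ _ h2
  · rintro ⟨k, rfl⟩
    obtain ⟨n', rfl⟩ : ∃ n', n = n' + 1 := ⟨n - 1, by omega⟩
    obtain ⟨d, hd⟩ := x_sub_one_sq_dvd N
    refine ⟨-(C k * d), C k * (X-1)^n', ?_⟩
    rw [map_mul]
    linear_combination (-(C k * (X - 1 : Polynomial ℤ)^n')) * hd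

/-- For every `n ≥ 1`, the quotient abelian group `Iⁿ / Iⁿ⁺¹` is isomorphic to `ℤ/Nℤ`,
where `I` is the ideal of `ℤ[X]/(X^N - 1)` generated by the image of `X - 1`. -/
theorem stmt_8 (N : ℕ) (hN : 1 ≤ N) (n : ℕ) (hn : 1 ≤ n) :
    Nonempty
      ((↥(Iaug N ^ n) ⧸ (Submodule.comap (Iaug N ^ n).subtype (Iaug N ^ (n + 1))))
        ≃+ ZMod N) := by
  set P : Submodule (A N) ↥(Iaug N ^ n) :=
    Submodule.comap (Iaug N ^ n).subtype (Iaug N ^ (n + 1)) with hP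
  set Q : Type := ↥(Iaug N ^ n) ⧸ P with hQ
  have htn : mkN N ((X-1)^n) ∈ Iaug N ^ n := by
    rw [Iaug_pow N n]; exact Ideal.mem_span_singleton_self _
  set q : Q := Submodule.Quotient.mk (⟨mkN N ((X-1)^n), htn⟩ : ↥(Iaug N ^ n)) with hq
  set f : ℤ →+ Q := (zmultiplesHom Q) q with hf
  have hmksmul : ∀ (m : ℤ) (x : ↥(Iaug N ^ n)),
      m • (Submodule.Quotient.mk x : Q) = Submodule.Quotient.mk (m • x) := by
    intro m x
    exact ((Submodule.mkQ P).toAddMonoidHom.map_zsmul m x).symm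
  have hsmul_val : ∀ (m : ℤ) (x : ↥(Iaug N ^ n)),
      ((m • x : ↥(Iaug N ^ n)) : A N) = (m : A N) * (x : A N) := by
    intro m x
    rw [Submodule.coe_smul_of_tower, zsmul_eq_mul]
  have hmemP : ∀ x : ↥(Iaug N ^ n), x ∈ P ↔ (x : A N) ∈ Iaug N ^ (n+1) := by
    intro x; rw [hP]; simp [Submodule.mem_comap]
  -- surjectivity
  have hsurj : Function.Surjective f := by
    intro x
    obtain ⟨y, rfl⟩ := Submodule.Quotient.mk_surjective P x
    have hy : (y : A N) ∈ Ideal.span {mkN N ((X-1)^n)} := by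
      rw [← Iaug_pow N n]; exact y.2
    obtain ⟨a, ha⟩ := Ideal.mem_span_singleton'.mp hy
    obtain ⟨p, rfl⟩ := Ideal.Quotient.mk_surjective (I := Ideal.span
      ({X ^ N - 1} : Set (Polynomial ℤ))) a
    refine ⟨p.eval 1, ?_⟩
    have h1 : f (p.eval 1) = Submodule.Quotient.mk
        ((p.eval 1 : ℤ) • (⟨mkN N ((X-1)^n), htn⟩ : ↥(Iaug N ^ n))) := by
      rw [hf]; exact hmksmul _ _
    rw [h1, Submodule.Quotient.eq, hmemP]
    have hv : ((((p.eval 1 : ℤ) • (⟨mkN N ((X-1)^n), htn⟩ : ↥(Iaug N ^ n))) - y :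
          ↥(Iaug N ^ n)) : A N)
        = mkN N (C (p.eval 1)) * mkN N ((X-1)^n) - mkN N p * mkN N ((X-1)^n) := by
      rw [AddSubgroupClass.coe_sub, hsmul_val, intCast_A]
      have : (y : A N) = mkN N p * mkN N ((X-1)^n) := ha.symm
      rw [this]
    rw [hv, ← map_mul, ← map_mul, ← map_sub, Iaug_pow N (n+1), span_mkN_iff]
    obtain ⟨d, hd⟩ : (X - 1 : Polynomial ℤ) ∣ p - C (p.eval 1) := by
      simpa using (X_sub_C_dvd_sub_C_eval (a := (1:ℤ)) (p := p))
    exact ⟨-d, 0, by linear_combination (-(X - 1 : Polynomial ℤ)^n) * hd⟩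
  -- kernel
  have hker : f.ker = AddSubgroup.zmultiples (N : ℤ) := by
    ext m
    rw [AddMonoidHom.mem_ker, Int.mem_zmultiples_iff]
    have h1 : f m = Submodule.Quotient.mk
        ((m : ℤ) • (⟨mkN N ((X-1)^n), htn⟩ : ↥(Iaug N ^ n))) := by
      rw [hf]; exact hmksmul _ _
    rw [h1, Submodule.Quotient.mk_eq_zero, hmemP, hsmul_val, intCast_A, ← map_mul,
      Iaug_pow N (n+1)]
    exact mem_iff_dvd N hN n hn m
  exact ⟨((QuotientAddGroup.quotientKerEquivOfSurjective f hsurj).symm.trans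
    (QuotientAddGroup.quotientAddEquivOfEq hker)).trans
    (Int.quotientZMultiplesNatEquivZMod N)⟩
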